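/- For any partial function f, every injective co-inverse of f is an injective sub-inverse of f, and conversely: f' injective satisfies f' ∘ f ∘ f' = f' if and only if f' is a mutual inverse of some subfunction of f. -/

import Mathlib

/-- `f` is injective as a partial function. -/
def pInj {α : Type*} (f : α →. α) : Prop :=
  ∀ ⦃x₁ x₂ y : α⦄, y ∈ f x₁ → y ∈ f x₂ → x₁ = x₂

/-- `g` is a subfunction of `f`. -/
def subFun {α : Type*} (g f : α →. α) : Prop :=
  ∀ x y, y ∈ g x → y ∈ f x

/-- for injective `f'`, `f'` is a co-inverse of `f`
(`f' ∘ f ∘ f' = f'`) iff `f'` is a mutual inverse of some subfunction of `f`. -/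
theorem injective_coinverse_iff_subinverse {α : Type*} (f f' : α →. α)
    (hinj : pInj f') :
    f'.comp (f.comp f') = f' ↔
      ∃ g : α →. α, subFun g f ∧
        g.comp (f'.comp g) = g ∧ f'.comp (g.comp f') = f' := by
  constructor
  · intro hco
    have hco' : ∀ a y, y ∈ f' a ↔ ∃ c, (∃ b, b ∈ f' a ∧ c ∈ f b) ∧ y ∈ f' c := by
      intro a y
      conv_lhs => rw [← hco]
      simp [PFun.comp_apply, Part.mem_bind_iff (g := (f : α → Part α)), Part.mem_bind_iff (g := (f' : α → Part α))]
    set g : α →. α :=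
      fun x => (f x).bind (fun y => Part.assert (x ∈ f' y) fun _ => Part.some y) with hgdef
    have hg : ∀ x y, y ∈ g x ↔ y ∈ f x ∧ x ∈ f' y := by
      intro x y
      simp only [hgdef, Part.mem_bind_iff, Part.mem_assert_iff, Part.mem_some_iff]
      constructor
      · rintro ⟨a, ha, hxa, rfl⟩
        exact ⟨ha, hxa⟩
      · rintro ⟨hy, hxy⟩
        exact ⟨y, hy, hxy, rfl⟩
    refine ⟨g, fun x y hy => ((hg x y).1 hy).1, ?_, ?_⟩
    · funext x
      ext w
      simp only [PFun.comp_apply, Part.mem_bind_iff (g := (f' : α → Part α)), Part.mem_bind_iff (g := (g : α → Part α))]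
      constructor
      · rintro ⟨z, ⟨y, hy, hz⟩, hw⟩
        obtain ⟨hyf, hxy⟩ := (hg x y).1 hy
        have hzx : z = x := Part.mem_unique hz hxy
        subst hzx
        exact hw
      · intro hw
        obtain ⟨hwf, hxw⟩ := (hg x w).1 hw
        exact ⟨x, ⟨w, hw, hxw⟩, hw⟩
    · funext a
      ext y
      simp only [PFun.comp_apply, Part.mem_bind_iff (g := (g : α → Part α)), Part.mem_bind_iff (g := (f' : α → Part α))]
      constructor
      · rintro ⟨c, ⟨b, hb, hc⟩, hy⟩
        obtain ⟨hcf, hbc⟩ := (hg b c).1 hc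
        have hac : a = c := hinj hb hbc
        subst hac
        exact hy
      · intro hy
        obtain ⟨c, ⟨b, hb, hc⟩, hyc⟩ := (hco' a y).1 hy
        have hca : c = a := hinj hyc hy
        subst hca
        exact ⟨c, ⟨b, hb, (hg b c).2 ⟨hc, hb⟩⟩, hyc⟩
  · rintro ⟨g, hsub, hgg, hcog⟩
    funext a
    ext y
    simp only [PFun.comp_apply, Part.mem_bind_iff (g := (f : α → Part α)), Part.mem_bind_iff (g := (f' : α → Part α))]
    have hcog' : ∀ a y, y ∈ f' a ↔ ∃ c, (∃ b, b ∈ f' a ∧ c ∈ g b) ∧ y ∈ f' c := by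
      intro a y
      conv_lhs => rw [← hcog]
      simp [PFun.comp_apply, Part.mem_bind_iff (g := (g : α → Part α)), Part.mem_bind_iff (g := (f' : α → Part α))]
    constructor
    · rintro ⟨c, ⟨b, hb, hcf⟩, hyc⟩
      obtain ⟨c', ⟨b', hb', hc'g⟩, hbc'⟩ := (hcog' a b).1 hb
      rw [show b' = b from Part.mem_unique hb' hb] at hc'g
      rw [Part.mem_unique (hsub _ _ hc'g) hcf] at hbc'
      have : y = b := Part.mem_unique hyc hbc'
      subst this
      exact hb
    · intro hy
      obtain ⟨c, ⟨b, hb, hcg⟩, hyc⟩ := (hcog' a y).1 hy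
      exact ⟨c, ⟨b, hb, hsub _ _ hcg⟩, hyc⟩
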